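/- Let a : ℕ → O_L be a sequence that is not identically zero. Then the set of zeroes {x ∈ m_L : Σ_{n≥0} a_n x^n/n! = 0} is finite. (First part of Lemma 2.3: a non-zero divided-power series over O_L has only finitely many zeroes in the residue disk m_L.) -/

import Mathlib

open Filter Metric
open scoped ENNReal NNReal

section Aux

variable {L : Type*} [NontriviallyNormedField L] [CompleteSpace L]

/-- The formal multilinear series with scalar coefficients `T`. -/
noncomputable def dpser (T : ℕ → L) : FormalMultilinearSeries L L L :=
  fun n => ContinuousMultilinearMap.mkPiRing L (Fin n) (T n)

lemma dpser_apply (T : ℕ → L) (n : ℕ) (y : L) :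
    (dpser T n fun _ => y) = y ^ n * T n := by
  simp [dpser, smul_eq_mul]

lemma hasFPSOB (T : ℕ → L) (C θ : ℝ) (hθ : 0 ≤ θ) (hT : ∀ n, ‖T n‖ ≤ C * θ ^ n)
    (r : NNReal) (hr0 : 0 < r) (hrθ : θ * r < 1) :
    HasFPowerSeriesOnBall (fun y : L => ∑' n, T n * y ^ n) (dpser T) 0 r := by
  have hC : 0 ≤ C := by
    have h0 := (norm_nonneg (T 0)).trans (hT 0)
    simpa using h0
  constructor
  · apply FormalMultilinearSeries.le_radius_of_bound _ C
    intro n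
    have h1 : ‖dpser T n‖ = ‖T n‖ := ContinuousMultilinearMap.norm_mkPiRing _
    rw [h1]
    calc ‖T n‖ * (r : ℝ) ^ n ≤ (C * θ ^ n) * (r : ℝ) ^ n := by
          exact mul_le_mul_of_nonneg_right (hT n) (pow_nonneg r.coe_nonneg n)
      _ = C * (θ * r) ^ n := by rw [mul_pow]; ring
      _ ≤ C * 1 := by
          exact mul_le_mul_of_nonneg_left
            (pow_le_one₀ (mul_nonneg hθ r.coe_nonneg) hrθ.le) hC
      _ = C := mul_one C
  · exact_mod_cast hr0
  · intro y hy
    rw [mem_emetric_ball_zero_iff, enorm_eq_nnnorm, ENNReal.coe_lt_coe] at hy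
    replace hy : ‖y‖ < (r : ℝ) := hy
    have hyθ : θ * ‖y‖ < 1 :=
      lt_of_le_of_lt (mul_le_mul_of_nonneg_left hy.le hθ) hrθ
    have hsum : Summable (fun n => T n * y ^ n) := by
      apply Summable.of_norm_bounded (g := fun n => C * (θ * ‖y‖) ^ n)
        ((summable_geometric_of_lt_one (mul_nonneg hθ (norm_nonneg y)) hyθ).mul_left C)
      intro n
      calc ‖T n * y ^ n‖ = ‖T n‖ * ‖y‖ ^ n := by rw [norm_mul, norm_pow]
        _ ≤ (C * θ ^ n) * ‖y‖ ^ n :=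
            mul_le_mul_of_nonneg_right (hT n) (pow_nonneg (norm_nonneg y) n)
        _ = C * (θ * ‖y‖) ^ n := by rw [mul_pow]; ring
    have heq : (fun n => dpser T n fun _ => y) = fun n => T n * y ^ n :=
      funext fun n => by rw [dpser_apply]; ring
    rw [heq, zero_add]
    exact hsum.hasSum

lemma lemU (T : ℕ → L) (C : ℝ) (hT : ∀ n, ‖T n‖ ≤ C)
    (hev : (fun y : L => ∑' n, T n * y ^ n) =ᶠ[nhds (0 : L)] 0) : ∀ n, T n = 0 := by
  have h := (hasFPSOB T C 1 zero_le_one (fun n => by simpa using hT n) (1/2)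
    (by norm_num) (by norm_num)).hasFPowerSeriesAt
  have h0 := h.eq_zero_of_eventually hev
  intro n
  have h1 : dpser T n = 0 := congrFun h0 n
  have h2 : (dpser T n) (fun _ => (1 : L)) = 0 := by rw [h1]; simp
  rw [dpser_apply] at h2
  simpa using h2

/-- The triangular summand used in the change-of-origin rearrangement. -/
noncomputable def wfun (c : ℕ → L) (z y : L) : ℕ × ℕ → L := fun q =>
  if q.2 ≤ q.1 then (Nat.choose q.1 q.2 : L) * c q.1 * z ^ q.2 * y ^ (q.1 - q.2) else 0

lemma claimA (c : ℕ → L) (σ : ℝ) (hσ0 : 0 ≤ σ) (hσ1 : σ < 1)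
    (hc : ∀ m, ‖c m‖ ≤ (σ * σ) ^ m) (hnat : ∀ N : ℕ, ‖(N : L)‖ ≤ 1)
    (z y : L) (hz : ‖z‖ ≤ 1) (hy : ‖y‖ ≤ 1) :
    ∑' m, c m * (z + y) ^ m
      = ∑' n, (∑' k, (Nat.choose (n + k) k : L) * c (n + k) * z ^ k) * y ^ n := by
  have hz1 : ∀ j : ℕ, ‖z ^ j‖ ≤ 1 := fun j => by
    rw [norm_pow]; exact pow_le_one₀ (norm_nonneg z) hz
  have hy1 : ∀ j : ℕ, ‖y ^ j‖ ≤ 1 := fun j => by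
    rw [norm_pow]; exact pow_le_one₀ (norm_nonneg y) hy
  have key : ∀ m j : ℕ, j ≤ m →
      ‖(Nat.choose m j : L) * c m * z ^ j * y ^ (m - j)‖ ≤ σ ^ m * σ ^ j := by
    intro m j hjm
    calc ‖(Nat.choose m j : L) * c m * z ^ j * y ^ (m - j)‖
        = ‖(Nat.choose m j : L)‖ * ‖c m‖ * ‖z ^ j‖ * ‖y ^ (m - j)‖ := by
          simp [norm_mul]
      _ ≤ 1 * (σ * σ) ^ m * 1 * 1 := by
          gcongr <;> first | exact hnat _ | exact hc m | exact hz1 j | exact hy1 _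
      _ = σ ^ m * σ ^ m := by rw [mul_pow]; ring
      _ ≤ σ ^ m * σ ^ j := by
          exact mul_le_mul_of_nonneg_left
            (pow_le_pow_of_le_one hσ0 hσ1.le hjm) (pow_nonneg hσ0 m)
  have keyw : ∀ q : ℕ × ℕ, ‖wfun c z y q‖ ≤ σ ^ q.1 * σ ^ q.2 := by
    intro q
    by_cases h : q.2 ≤ q.1
    · simpa [wfun, h] using key q.1 q.2 h
    · simp only [wfun, if_neg h, norm_zero]
      positivity
  have keyu : ∀ q : ℕ × ℕ, ‖wfun c z y (q.1 + q.2, q.2)‖ ≤ σ ^ q.1 * σ ^ q.2 := by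
    intro q
    have h := key (q.1 + q.2) q.2 (Nat.le_add_left _ _)
    have h2 : σ ^ (q.1 + q.2) * σ ^ q.2 ≤ σ ^ q.1 * σ ^ q.2 := by
      exact mul_le_mul_of_nonneg_right
        (pow_le_pow_of_le_one hσ0 hσ1.le (Nat.le_add_right _ _)) (pow_nonneg hσ0 _)
    refine le_trans ?_ h2
    simpa [wfun, Nat.le_add_left] using h
  have hgeo : Summable (fun q : ℕ × ℕ => σ ^ q.1 * σ ^ q.2) :=
    (summable_geometric_of_lt_one hσ0 hσ1).mul_of_nonneg
      (summable_geometric_of_lt_one hσ0 hσ1)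
      (fun n => pow_nonneg hσ0 n) (fun n => pow_nonneg hσ0 n)
  have hw : Summable (wfun c z y) := Summable.of_norm_bounded hgeo keyw
  have hu : Summable (fun q : ℕ × ℕ => wfun c z y (q.1 + q.2, q.2)) :=
    Summable.of_norm_bounded hgeo keyu
  have hfin : ∀ m : ℕ, ∀ j ∉ Finset.range (m + 1), wfun c z y (m, j) = 0 := by
    intro m j hj
    have : ¬ j ≤ m := by simpa [Finset.mem_range, Nat.lt_succ_iff] using hj
    simp [wfun, this]
  have step2 : ∀ m, ∑' j, wfun c z y (m, j) = c m * (z + y) ^ m := by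
    intro m
    rw [tsum_eq_sum (hfin m), add_pow, Finset.mul_sum]
    apply Finset.sum_congr rfl
    intro j hj
    have hjm : j ≤ m := Finset.mem_range_succ_iff.mp hj
    simp only [wfun, if_pos hjm]
    ring
  have step1 : ∑' q, wfun c z y q = ∑' m, ∑' j, wfun c z y (m, j) :=
    Summable.tsum_prod' hw (fun m => summable_of_ne_finset_zero (hfin m))
  have hinj : Function.Injective (fun q : ℕ × ℕ => ((q.1 + q.2, q.2) : ℕ × ℕ)) := by
    intro a b h
    simp only [Prod.ext_iff] at h ⊢
    omega
  have hsupp : Function.support (wfun c z y) ⊆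
      Set.range (fun q : ℕ × ℕ => ((q.1 + q.2, q.2) : ℕ × ℕ)) := by
    rintro ⟨m, j⟩ hq
    have hle : j ≤ m := by
      by_contra h
      exact hq (by simp [wfun, h])
    refine ⟨(m - j, j), ?_⟩
    show (m - j + j, j) = (m, j)
    have hmj : m - j + j = m := by omega
    rw [hmj]
  have step3 : ∑' q : ℕ × ℕ, wfun c z y (q.1 + q.2, q.2) = ∑' q, wfun c z y q :=
    hinj.tsum_eq hsupp
  have step4 : ∑' q : ℕ × ℕ, wfun c z y (q.1 + q.2, q.2)
      = ∑' n, ∑' k, wfun c z y (n + k, k) :=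
    Summable.tsum_prod' hu (fun n => Summable.of_norm_bounded
      (((summable_geometric_of_lt_one hσ0 hσ1).mul_left (σ ^ n)))
      (fun k => keyu (n, k)))
  have step5 : ∀ n, ∑' k, wfun c z y (n + k, k)
      = (∑' k, (Nat.choose (n + k) k : L) * c (n + k) * z ^ k) * y ^ n := by
    intro n
    rw [← tsum_mul_right]
    apply tsum_congr
    intro k
    simp [wfun, Nat.le_add_left]
  calc ∑' m, c m * (z + y) ^ m
      = ∑' m, ∑' j, wfun c z y (m, j) := tsum_congr fun m => (step2 m).symm
    _ = ∑' q, wfun c z y q := step1.symm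
    _ = ∑' q : ℕ × ℕ, wfun c z y (q.1 + q.2, q.2) := step3.symm
    _ = ∑' n, ∑' k, wfun c z y (n + k, k) := step4
    _ = ∑' n, (∑' k, (Nat.choose (n + k) k : L) * c (n + k) * z ^ k) * y ^ n :=
        tsum_congr step5

end Aux

/-- a non-zero divided-power series over `O_L` has only finitely many
zeroes in the residue disk `m_L`. Here `p` is odd and `L/ℚ_p` is finite unramified. -/
theorem statement4 (p : ℕ) [Fact p.Prime] (hp : Odd p) (L : Type*) [NormedField L]
    [CompleteSpace L] [IsUltrametricDist L] [CharZero L]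
    [Algebra ℚ_[p] L] [FiniteDimensional ℚ_[p] L]
    (hext : ∀ q : ℚ_[p], ‖algebraMap ℚ_[p] L q‖ = ‖q‖)
    (hur : ∀ y : L, y ≠ 0 → ∃ n : ℤ, ‖y‖ = (p : ℝ) ^ n)
    (a : ℕ → L) (ha : ∀ n, ‖a n‖ ≤ 1) (hnz : ∃ n, a n ≠ 0) :
    {x : L | ‖x‖ < 1 ∧ ∑' n : ℕ, a n * x ^ n / (n.factorial : L) = 0}.Finite := by
  classical
  have hp_prime : p.Prime := Fact.out
  have hp3 : 3 ≤ p := by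
    have h2 := hp_prime.two_le
    have hodd := Nat.odd_iff.mp hp
    omega
  have hpR : (1 : ℝ) < p := by exact_mod_cast hp_prime.one_lt
  have hpR0 : (0 : ℝ) < p := lt_trans one_pos hpR
  letI : NontriviallyNormedField L :=
    { (inferInstance : NormedField L) with
      non_trivial := by
        refine ⟨algebraMap ℚ_[p] L ((p : ℚ_[p]))⁻¹, ?_⟩
        rw [hext, norm_inv, Padic.norm_p, inv_inv]
        exact hpR }
  letI : NormedSpace ℚ_[p] L :=
    { norm_smul_le := fun r x => by
        rw [Algebra.smul_def, norm_mul, hext] }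
  letI : ProperSpace L := FiniteDimensional.proper ℚ_[p] L
  -- norms of integers in L
  have hnatL : ∀ N : ℕ, ‖(N : L)‖ ≤ 1 := by
    intro N
    rw [← map_natCast (algebraMap ℚ_[p] L), hext]
    have h := Padic.norm_int_le_one (p := p) (N : ℤ)
    simpa using h
  have hpL : ‖((p : ℕ) : L)‖ = (p : ℝ)⁻¹ := by
    rw [← map_natCast (algebraMap ℚ_[p] L), hext]
    exact Padic.norm_p
  -- sqrt facts
  have hsp0 : 0 < Real.sqrt p := Real.sqrt_pos.2 hpR0
  have hsp1 : 1 < Real.sqrt p := by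
    have : Real.sqrt 1 < Real.sqrt p := Real.sqrt_lt_sqrt (by norm_num) hpR
    simpa using this
  set θ : ℝ := (Real.sqrt p)⁻¹ with hθdef
  have hθ0 : 0 ≤ θ := inv_nonneg.2 (Real.sqrt_nonneg _)
  have hθ1 : θ < 1 := inv_lt_one_of_one_lt₀ hsp1
  set c : ℕ → L := fun m => a m * ((p : ℕ) : L) ^ m / ((m.factorial : ℕ) : L) with hcdef
  -- norm of factorials
  have hfactL : ∀ m : ℕ, ‖((m.factorial : ℕ) : L)‖
      = ((p : ℝ) ^ (padicValNat p (m.factorial)))⁻¹ := by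
    intro m
    rw [← map_natCast (algebraMap ℚ_[p] L), hext]
    have h1 : ((m.factorial : ℕ) : ℚ_[p]) = ((m.factorial : ℚ) : ℚ_[p]) := by push_cast; ring
    rw [h1, Padic.eq_padicNorm]
    have h2 : (m.factorial : ℚ) ≠ 0 := Nat.cast_ne_zero.2 (Nat.factorial_ne_zero m)
    rw [padicNorm.eq_zpow_of_nonzero h2]
    push_cast
    rw [padicValRat.of_nat, zpow_neg, zpow_natCast]
  have h2v : ∀ m : ℕ, 2 * padicValNat p (m.factorial) ≤ m := by
    intro m
    have h := sub_one_mul_padicValNat_factorial (p := p) m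
    have h2 : 2 * padicValNat p (m.factorial)
        ≤ (p - 1) * padicValNat p (m.factorial) :=
      Nat.mul_le_mul_right _ (by omega)
    omega
  have hc : ∀ m, ‖c m‖ ≤ θ ^ m := by
    intro m
    rw [hcdef]
    simp only
    rw [norm_div, norm_mul, norm_pow, hpL, hfactL, div_eq_mul_inv, inv_inv]
    have hv : (p : ℝ) ^ (padicValNat p (m.factorial)) ≤ Real.sqrt p ^ m := by
      have h1 : (p : ℝ) ^ (padicValNat p (m.factorial))
          = Real.sqrt p ^ (2 * padicValNat p (m.factorial)) := by
        rw [pow_mul, Real.sq_sqrt hpR0.le]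
      rw [h1]
      exact pow_le_pow_right₀ hsp1.le (h2v m)
    have hss : Real.sqrt p * Real.sqrt p = (p : ℝ) := Real.mul_self_sqrt hpR0.le
    calc ‖a m‖ * ((p : ℝ)⁻¹) ^ m * (p : ℝ) ^ (padicValNat p (m.factorial))
        ≤ 1 * ((p : ℝ)⁻¹) ^ m * Real.sqrt p ^ m :=
          mul_le_mul (mul_le_mul_of_nonneg_right (ha m) (by positivity)) hv
            (by positivity) (by positivity)
      _ = ((p : ℝ)⁻¹ * Real.sqrt p) ^ m := by rw [one_mul, ← mul_pow]
      _ = θ ^ m := by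
          congr 1
          rw [hθdef]
          field_simp
          exact Real.sq_sqrt hpR0.le
  set σ : ℝ := (Real.sqrt (Real.sqrt p))⁻¹ with hσdef
  have hσσ : σ * σ = θ := by
    rw [hσdef, ← mul_inv, Real.mul_self_sqrt (Real.sqrt_nonneg _)]
  have hσ0 : 0 ≤ σ := inv_nonneg.2 (Real.sqrt_nonneg _)
  have hσ1 : σ < 1 := by
    apply inv_lt_one_of_one_lt₀
    have : Real.sqrt 1 < Real.sqrt (Real.sqrt p) := Real.sqrt_lt_sqrt (by norm_num) hsp1
    simpa using this
  have hpneL : ((p : ℕ) : L) ≠ 0 := Nat.cast_ne_zero.2 hp_prime.pos.ne'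
  -- the rescaled zero set
  set Z : Set L := {u : L | ‖u‖ ≤ 1 ∧ ∑' m, c m * u ^ m = 0} with hZdef
  have hZfin : Z.Finite := by
    by_contra hinf
    have hinf' : Z.Infinite := hinf
    obtain ⟨z₀, hz₀K, hacc⟩ := hinf'.exists_accPt_of_subset_isCompact
      (isCompact_closedBall (0 : L) 1)
      (fun u hu => by simpa [Metric.mem_closedBall, dist_zero_right] using hu.1)
    have hz₀ : ‖z₀‖ ≤ 1 := by
      simpa [Metric.mem_closedBall, dist_zero_right] using hz₀K
    -- analyticity of g at z₀
    have h32 : (3 : ℝ) / 2 < Real.sqrt p := by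
      rw [Real.lt_sqrt (by norm_num)]
      have h3p : (3 : ℝ) ≤ p := by exact_mod_cast hp3
      nlinarith [h3p]
    have hθ32 : θ * (((3 : NNReal) / 2 : NNReal) : ℝ) < 1 := by
      have hc32 : (((3 : NNReal) / 2 : NNReal) : ℝ) = 3 / 2 := by norm_num
      rw [hc32, hθdef, inv_mul_eq_div, div_lt_one hsp0]
      exact h32
    have hball := hasFPSOB c 1 θ hθ0 (fun m => by simpa using hc m) (3/2)
      (by norm_num) hθ32
    have hanal : AnalyticAt L (fun u : L => ∑' m, c m * u ^ m) z₀ := by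
      apply hball.analyticAt_of_mem
      rw [mem_emetric_ball_zero_iff]
      have h1 : (‖z₀‖₊ : ℝ≥0∞) ≤ 1 := by
        exact_mod_cast (show ‖z₀‖₊ ≤ 1 from hz₀)
      exact lt_of_le_of_lt h1 (by exact_mod_cast (by rw [← NNReal.coe_lt_coe]; push_cast; norm_num : (1 : NNReal) < 3 / 2))
    -- z₀ is an accumulation point of zeroes
    have hfreq : ∃ᶠ u in nhdsWithin z₀ {z₀}ᶜ, (fun u : L => ∑' m, c m * u ^ m) u = 0 := by
      rw [frequently_nhdsWithin_iff]
      have h := (accPt_iff_frequently (x := z₀) (C := Z)).mp hacc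
      exact h.mono (fun u hu => ⟨hu.2.2, by simpa using hu.1⟩)
    have hev : ∀ᶠ u in nhds z₀, (fun u : L => ∑' m, c m * u ^ m) u = 0 := by
      rcases hanal.eventually_eq_zero_or_eventually_ne_zero with h | h
      · exact h
      · exfalso
        obtain ⟨x, hx1, hx2⟩ := (hfreq.and_eventually h).exists
        exact hx2 hx1
    -- change of origin
    set T : ℕ → L := fun n => ∑' k, ((Nat.choose (n + k) k : ℕ) : L) * c (n + k) * z₀ ^ k
      with hTdef
    have hterm : ∀ n k : ℕ,
        ‖((Nat.choose (n + k) k : ℕ) : L) * c (n + k) * z₀ ^ k‖ ≤ θ ^ k := by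
      intro n k
      calc ‖((Nat.choose (n + k) k : ℕ) : L) * c (n + k) * z₀ ^ k‖
          = ‖((Nat.choose (n + k) k : ℕ) : L)‖ * ‖c (n + k)‖ * ‖z₀ ^ k‖ := by
            simp [norm_mul]
        _ ≤ 1 * θ ^ (n + k) * 1 := by
            gcongr
            · exact hnatL _
            · exact hc _
            · rw [norm_pow]; exact pow_le_one₀ (norm_nonneg _) hz₀
        _ = θ ^ (n + k) := by ring
        _ ≤ θ ^ k := pow_le_pow_of_le_one hθ0 hθ1.le (Nat.le_add_left _ _)
    have hTbound : ∀ n, ‖T n‖ ≤ (1 - θ)⁻¹ := by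
      intro n
      have hsumnorm : Summable (fun k =>
          ‖((Nat.choose (n + k) k : ℕ) : L) * c (n + k) * z₀ ^ k‖) :=
        Summable.of_nonneg_of_le (fun _ => norm_nonneg _) (hterm n)
          (summable_geometric_of_lt_one hθ0 hθ1)
      calc ‖T n‖ ≤ ∑' k, ‖((Nat.choose (n + k) k : ℕ) : L) * c (n + k) * z₀ ^ k‖ :=
            norm_tsum_le_tsum_norm hsumnorm
        _ ≤ ∑' k, θ ^ k := Summable.tsum_le_tsum (hterm n) hsumnorm
            (summable_geometric_of_lt_one hθ0 hθ1)
        _ = (1 - θ)⁻¹ := tsum_geometric_of_lt_one hθ0 hθ1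
    have hCA : ∀ y : L, ‖y‖ ≤ 1 →
        ∑' m, c m * (z₀ + y) ^ m = ∑' n, T n * y ^ n := by
      intro y hy
      have h := claimA c σ hσ0 hσ1 (fun m => by rw [hσσ]; exact hc m) hnatL z₀ y hz₀ hy
      exact h
    have hev0 : (fun y : L => ∑' n, T n * y ^ n) =ᶠ[nhds (0 : L)] 0 := by
      have ht : Filter.Tendsto (fun y : L => z₀ + y) (nhds 0) (nhds z₀) := by
        have hcont : Continuous (fun y : L => z₀ + y) := continuous_const.add continuous_id
        have := hcont.tendsto (0 : L)
        simpa using this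
      filter_upwards [ht.eventually hev, Metric.ball_mem_nhds (0 : L) one_pos]
        with y h1 h2
      have hy1 : ‖y‖ ≤ 1 := le_of_lt (by simpa [Metric.mem_ball, dist_zero_right] using h2)
      simp only [Pi.zero_apply]
      rw [← hCA y hy1]
      exact h1
    have hT0 : ∀ n, T n = 0 := lemU T (1 - θ)⁻¹ hTbound hev0
    -- g vanishes on the whole unit ball
    have hg0 : ∀ w : L, ‖w‖ ≤ 1 → ∑' m, c m * w ^ m = 0 := by
      intro w hw
      have hsub : ‖w - z₀‖ ≤ 1 := by
        calc ‖w - z₀‖ ≤ max ‖w‖ ‖z₀‖ := by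
              rw [sub_eq_add_neg]
              simpa [norm_neg] using IsUltrametricDist.norm_add_le_max w (-z₀)
          _ ≤ 1 := max_le hw hz₀
      have h := hCA (w - z₀) hsub
      have hzz : z₀ + (w - z₀) = w := by ring
      rw [hzz] at h
      rw [h]
      simp [hT0]
    have hcev : (fun y : L => ∑' m, c m * y ^ m) =ᶠ[nhds (0 : L)] 0 := by
      filter_upwards [Metric.closedBall_mem_nhds (0 : L) one_pos] with y hy
      exact hg0 y (by simpa [Metric.mem_closedBall, dist_zero_right] using hy)
    have hc0 : ∀ m, c m = 0 :=
      lemU c 1 (fun m => (hc m).trans (pow_le_one₀ hθ0 hθ1.le)) hcev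
    obtain ⟨n₀, hn₀⟩ := hnz
    apply hn₀
    have h := hc0 n₀
    rw [hcdef] at h
    simp only at h
    have hfne : ((n₀.factorial : ℕ) : L) ≠ 0 := Nat.cast_ne_zero.2 (Nat.factorial_ne_zero n₀)
    rw [div_eq_zero_iff] at h
    rcases h with h | h
    · rcases mul_eq_zero.mp h with h' | h'
      · exact h'
      · exact absurd h' (pow_ne_zero _ hpneL)
    · exact absurd h hfne
  -- the original zero set injects into Z
  apply Set.Finite.subset (hZfin.image (fun u => ((p : ℕ) : L) * u))
  rintro x ⟨hx1, hx2⟩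
  have hxle : ‖x‖ ≤ (p : ℝ)⁻¹ := by
    rcases eq_or_ne x 0 with rfl | hx0
    · simp [inv_nonneg, hpR0.le]
    · obtain ⟨n, hn⟩ := hur x hx0
      have hn0 : n < 0 := by
        by_contra h
        push_neg at h
        have h1 : ((p : ℝ)) ^ (0 : ℤ) ≤ (p : ℝ) ^ n := zpow_le_zpow_right₀ hpR.le h
        rw [hn] at hx1
        simp only [zpow_zero] at h1
        linarith
      have h2 : (p : ℝ) ^ n ≤ (p : ℝ) ^ (-1 : ℤ) := zpow_le_zpow_right₀ hpR.le (by omega)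
      rw [hn]
      simpa [zpow_neg, zpow_one] using h2
  refine ⟨((p : ℕ) : L)⁻¹ * x, ⟨?_, ?_⟩, by field_simp⟩
  · rw [norm_mul, norm_inv, hpL, inv_inv]
    calc (p : ℝ) * ‖x‖ ≤ (p : ℝ) * (p : ℝ)⁻¹ :=
        mul_le_mul_of_nonneg_left hxle hpR0.le
      _ = 1 := mul_inv_cancel₀ hpR0.ne'
  · have hmm : ∀ m : ℕ, c m * (((p : ℕ) : L)⁻¹ * x) ^ m
        = a m * x ^ m / ((m.factorial : ℕ) : L) := by
      intro m
      have hcancel : ((p : ℕ) : L) ^ m * (((p : ℕ) : L)⁻¹) ^ m = 1 := by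
        rw [← mul_pow, mul_inv_cancel₀ hpneL, one_pow]
      rw [hcdef]
      simp only
      calc a m * ((p : ℕ) : L) ^ m / ((m.factorial : ℕ) : L) * ((((p : ℕ) : L))⁻¹ * x) ^ m
          = a m * x ^ m / ((m.factorial : ℕ) : L)
              * (((p : ℕ) : L) ^ m * (((p : ℕ) : L)⁻¹) ^ m) := by
            rw [mul_pow]; ring
        _ = a m * x ^ m / ((m.factorial : ℕ) : L) := by rw [hcancel, mul_one]
    rw [tsum_congr hmm]
    exact hx2
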